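/- Let x : [0,∞) → ℝ^d be càdlàg and t ≥ 0. Then f(x)(t) ≠ x(t) if and only if the following three conditions hold simultaneously: x is constant on the open interval (η_x(t), θ_x(t)), η_x(t) < t < θ_x(t) < ∞, and θ_x(t) ∈ disc(x). -/

import Mathlib

open scoped NNReal ENNReal Classical
open Filter Topology

noncomputable section

/-- Left limit of `x` at `t`, with the convention `x(0−) = x(0)`. -/
def leftLimit {d : ℕ} (x : ℝ≥0 → Fin d → ℝ) (t : ℝ≥0) : Fin d → ℝ :=
  if 0 < t then limUnder (nhdsWithin t (Set.Iio t)) x else x 0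

/-- `x : [0,∞) → ℝ^d` is càdlàg: right-continuous everywhere, with left limits at every `t > 0`. -/
def IsCadlag {d : ℕ} (x : ℝ≥0 → Fin d → ℝ) : Prop :=
  (∀ t : ℝ≥0, ContinuousWithinAt x (Set.Ici t) t) ∧
  (∀ t : ℝ≥0, 0 < t →
    ∃ L : Fin d → ℝ, Filter.Tendsto x (nhdsWithin t (Set.Iio t)) (nhds L))

/-- `x` is constant on the set `I`. -/
def ConstOn {d : ℕ} (x : ℝ≥0 → Fin d → ℝ) (I : Set ℝ≥0) : Prop :=
  ∀ s ∈ I, ∀ s' ∈ I, x s = x s'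

/-- `η_x(t) = sup {s ∈ [0,t) : x(s) ≠ x(t)}`, with the convention `sup ∅ = 0`. -/
def eta {d : ℕ} (x : ℝ≥0 → Fin d → ℝ) (t : ℝ≥0) : ℝ≥0 :=
  sSup {s : ℝ≥0 | s < t ∧ x s ≠ x t}

/-- The set of discontinuity points of `x`: the `t > 0` where `x(t) ≠ x(t−)`. -/
def disc {d : ℕ} (x : ℝ≥0 → Fin d → ℝ) : Set ℝ≥0 :=
  {t : ℝ≥0 | 0 < t ∧ x t ≠ leftLimit x t}

/-- `θ_x(t) = inf {s ≥ t : x(s) ≠ x(t−)} ∈ [0,∞]`, with the convention `inf ∅ = ∞`. -/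
def theta {d : ℕ} (x : ℝ≥0 → Fin d → ℝ) (t : ℝ≥0) : ℝ≥0∞ :=
  sInf ((fun s : ℝ≥0 => (s : ℝ≥0∞)) '' {s : ℝ≥0 | t ≤ s ∧ x s ≠ leftLimit x t})

/-- The map `f` replacing each "stair" of `x` by the linear interpolation of its endpoints:
`f(x)(t) = x(η_x(t)) + ((t − η_x(t))/(θ_x(t) − η_x(t))) • (x(θ_x(t)) − x(η_x(t)))`,
with `f(x)(t) = x(t)` when `θ_x(t) = η_x(t)` or `θ_x(t) = ∞`. -/
def fmap {d : ℕ} (x : ℝ≥0 → Fin d → ℝ) : ℝ≥0 → Fin d → ℝ := fun t =>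
  if theta x t = ((eta x t : ℝ≥0) : ℝ≥0∞) ∨ theta x t = ⊤ then x t
  else x (eta x t) +
    (((t : ℝ) - (eta x t : ℝ)) / ((theta x t).toReal - (eta x t : ℝ))) •
      (x (theta x t).toNNReal - x (eta x t))

/-- The space `D` of càdlàg functions `[0,∞) → ℝ^d`. -/
def Cadlag (d : ℕ) : Type := {x : ℝ≥0 → Fin d → ℝ // IsCadlag x}

/-- The Kolmogorov σ-algebra on `D`: the trace of the σ-algebra generated by the coordinate
evaluation maps `x ↦ x(t)`, `t ≥ 0` (i.e. of the product σ-algebra). -/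
instance (d : ℕ) : MeasurableSpace (Cadlag d) :=
  MeasurableSpace.comap (fun x : Cadlag d => x.1)
    (inferInstance : MeasurableSpace (ℝ≥0 → Fin d → ℝ))

/-- Lemma 2.2: `f(x)(t) ≠ x(t)` iff `x` is constant on `(η_x(t), θ_x(t))`,
`η_x(t) < t < θ_x(t) < ∞` and `θ_x(t) ∈ disc(x)`. -/
theorem fmap_ne_iff (d : ℕ) (hd : 1 ≤ d) (x : ℝ≥0 → Fin d → ℝ)
    (hx : IsCadlag x) (t : ℝ≥0) :
    fmap x t ≠ x t ↔
      ConstOn x (Set.Ioo (eta x t) (theta x t).toNNReal) ∧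
      eta x t < t ∧ (t : ℝ≥0∞) < theta x t ∧ theta x t ≠ ⊤ ∧
      (theta x t).toNNReal ∈ disc x := by
  classical
  -- basic order facts
  have hηt : eta x t ≤ t := csSup_le' (fun s hs => hs.1.le)
  have htθ : (t : ℝ≥0∞) ≤ theta x t := by
    refine le_sInf ?_
    rintro b ⟨s, ⟨hs, _⟩, rfl⟩
    show (t : ℝ≥0∞) ≤ (s : ℝ≥0∞)
    exact_mod_cast hs
  have hbdd : BddAbove {s : ℝ≥0 | s < t ∧ x s ≠ x t} := ⟨t, fun u hu => hu.1.le⟩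
  have hconst1 : ∀ s, eta x t < s → s < t → x s = x t := by
    intro s h1 h2
    by_contra h
    exact absurd (le_csSup hbdd ⟨h2, h⟩) (not_le.2 h1)
  have hconst2 : ∀ s : ℝ≥0, t ≤ s → (s : ℝ≥0∞) < theta x t → x s = leftLimit x t := by
    intro s h1 h2
    by_contra h
    have hmem : (s : ℝ≥0∞) ∈ ((fun s : ℝ≥0 => (s : ℝ≥0∞)) '' {s : ℝ≥0 | t ≤ s ∧ x s ≠ leftLimit x t}) :=
      ⟨s, ⟨h1, h⟩, rfl⟩
    exact absurd (sInf_le hmem) (not_le.2 h2)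
  have hxη : eta x t < t → x (eta x t) = x t := by
    intro h
    have h1 : Tendsto x (𝓝[>] (eta x t)) (𝓝 (x (eta x t))) :=
      (hx.1 (eta x t)).mono Set.Ioi_subset_Ici_self
    have h2 : Tendsto x (𝓝[>] (eta x t)) (𝓝 (x t)) := by
      refine tendsto_const_nhds.congr' ?_
      filter_upwards [Ioo_mem_nhdsGT h] with s hs
      exact (hconst1 s hs.1 hs.2).symm
    exact tendsto_nhds_unique h1 h2
  have hleftt : eta x t < t → leftLimit x t = x t := by
    intro h
    have ht0 : 0 < t := (zero_le : (0:ℝ≥0) ≤ eta x t).trans_lt h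
    haveI : (𝓝[<] t).NeBot := nhdsWithin_Iio_self_neBot' ⟨0, ht0⟩
    have h2 : Tendsto x (𝓝[<] t) (𝓝 (x t)) := by
      refine tendsto_const_nhds.congr' ?_
      filter_upwards [Ioo_mem_nhdsLT h] with s hs
      exact (hconst1 s hs.1 hs.2).symm
    unfold leftLimit
    rw [if_pos ht0]
    exact h2.limUnder_eq
  -- constancy on (η, θ') given η < t
  have hconstAll : eta x t < t →
      ∀ s, eta x t < s → s < (theta x t).toNNReal → x s = x t := by
    intro h1 s hs1 hs2
    rcases lt_or_ge s t with h | h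
    · exact hconst1 s hs1 h
    · have hsθ : (s : ℝ≥0∞) < theta x t :=
        lt_of_lt_of_le (ENNReal.coe_lt_coe.2 hs2) ENNReal.coe_toNNReal_le_self
      rw [hconst2 s h hsθ, hleftt h1]
  have hleftθ : eta x t < t → t < (theta x t).toNNReal →
      leftLimit x (theta x t).toNNReal = x t := by
    intro h1 h2
    have hθ'0 : 0 < (theta x t).toNNReal := (zero_le : (0:ℝ≥0) ≤ t).trans_lt h2
    haveI : (𝓝[<] (theta x t).toNNReal).NeBot := nhdsWithin_Iio_self_neBot' ⟨0, hθ'0⟩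
    have h3 : Tendsto x (𝓝[<] (theta x t).toNNReal) (𝓝 (x t)) := by
      refine tendsto_const_nhds.congr' ?_
      filter_upwards [Ioo_mem_nhdsLT (h1.trans h2)] with s hs
      exact (hconstAll h1 s hs.1 hs.2).symm
    unfold leftLimit
    rw [if_pos hθ'0]
    exact h3.limUnder_eq
  constructor
  · -- forward direction
    intro hne
    have hcond : ¬ (theta x t = ((eta x t : ℝ≥0) : ℝ≥0∞) ∨ theta x t = ⊤) := by
      intro h
      exact hne (by unfold fmap; rw [if_pos h])
    push_neg at hcond
    obtain ⟨hθη, hθtop⟩ := hcond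
    have hfm : fmap x t = x (eta x t) +
        (((t : ℝ) - (eta x t : ℝ)) / ((theta x t).toReal - (eta x t : ℝ))) •
          (x (theta x t).toNNReal - x (eta x t)) := by
      unfold fmap
      rw [if_neg (not_or.2 ⟨hθη, hθtop⟩)]
    have hθeq : theta x t = ((theta x t).toNNReal : ℝ≥0∞) := (ENNReal.coe_toNNReal hθtop).symm
    have hηθ : ((eta x t : ℝ≥0) : ℝ≥0∞) < theta x t :=
      lt_of_le_of_ne ((ENNReal.coe_le_coe.2 hηt).trans htθ) (Ne.symm hθη)
    have hηθ' : eta x t < (theta x t).toNNReal := by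
      rw [hθeq] at hηθ; exact_mod_cast hηθ
    have htθ' : t ≤ (theta x t).toNNReal := by
      rw [hθeq] at htθ; exact_mod_cast htθ
    have hη_lt_t : eta x t < t := by
      rcases lt_or_eq_of_le hηt with h | h
      · exact h
      · exfalso
        apply hne
        rw [hfm, h]
        simp
    have ht_lt_θ' : t < (theta x t).toNNReal := by
      rcases lt_or_eq_of_le htθ' with h | h
      · exact h
      · exfalso
        apply hne
        have hxηt := hxη hη_lt_t
        have hden : (theta x t).toReal - (eta x t : ℝ) ≠ 0 := by
          have : ((eta x t : ℝ)) < (theta x t).toReal := by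
            rw [hθeq, ENNReal.coe_toReal]
            exact_mod_cast hηθ'
          linarith
        have hnum : ((t : ℝ) - (eta x t : ℝ)) = (theta x t).toReal - (eta x t : ℝ) := by
          rw [hθeq, ENNReal.coe_toReal, ← h]
        rw [hfm, hnum, div_self hden, one_smul, ← h, hxηt]
        abel
    have hxηt := hxη hη_lt_t
    have hxθ'_ne : x (theta x t).toNNReal ≠ x t := by
      intro heq
      apply hne
      rw [hfm, hxηt, heq]
      simp
    refine ⟨?_, hη_lt_t, ?_, hθtop, ?_⟩
    · intro s hs s' hs'
      rw [hconstAll hη_lt_t s hs.1 hs.2, hconstAll hη_lt_t s' hs'.1 hs'.2]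
    · rw [hθeq]; exact_mod_cast ht_lt_θ'
    · refine ⟨(zero_le : (0:ℝ≥0) ≤ t).trans_lt ht_lt_θ', ?_⟩
      rw [hleftθ hη_lt_t ht_lt_θ']
      exact hxθ'_ne
  · -- backward direction
    rintro ⟨hconstOn, hη_lt_t, htθlt, hθtop, hθ'0, hdisc⟩
    have hθeq : theta x t = ((theta x t).toNNReal : ℝ≥0∞) := (ENNReal.coe_toNNReal hθtop).symm
    have ht_lt_θ' : t < (theta x t).toNNReal := by
      rw [hθeq] at htθlt; exact_mod_cast htθlt
    have hηθ : theta x t ≠ ((eta x t : ℝ≥0) : ℝ≥0∞) := by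
      intro h
      have : (t : ℝ≥0∞) < ((eta x t : ℝ≥0) : ℝ≥0∞) := h ▸ htθlt
      exact absurd hηt (not_le.2 (by exact_mod_cast this))
    have hfm : fmap x t = x (eta x t) +
        (((t : ℝ) - (eta x t : ℝ)) / ((theta x t).toReal - (eta x t : ℝ))) •
          (x (theta x t).toNNReal - x (eta x t)) := by
      unfold fmap
      rw [if_neg (not_or.2 ⟨hηθ, hθtop⟩)]
    have hxηt := hxη hη_lt_t
    have hxθ'_ne : x (theta x t).toNNReal ≠ x t := by
      rw [← hleftθ hη_lt_t ht_lt_θ']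
      exact hdisc
    have hlampos : 0 < ((t : ℝ) - (eta x t : ℝ)) / ((theta x t).toReal - (eta x t : ℝ)) := by
      apply div_pos
      · have : (eta x t : ℝ) < (t : ℝ) := by exact_mod_cast hη_lt_t
        linarith
      · have : (eta x t : ℝ) < (theta x t).toReal := by
          rw [hθeq, ENNReal.coe_toReal]
          exact_mod_cast hη_lt_t.trans ht_lt_θ'
        linarith
    rw [hfm, hxηt]
    intro heq
    have h0 : (((t : ℝ) - (eta x t : ℝ)) / ((theta x t).toReal - (eta x t : ℝ))) •
        (x (theta x t).toNNReal - x t) = 0 := by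
      have := heq
      rwa [add_eq_left] at this
    rcases smul_eq_zero.1 h0 with h | h
    · exact absurd h (ne_of_gt hlampos)
    · exact hxθ'_ne (sub_eq_zero.1 h)
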